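/- The map χₚ[d₀,d] := χ[d₀,d] − d ⊗ d₀ restricts to a linear bijection from the tangent plane T_{d₀}S² = {v ∈ ℝ³ : v·d₀ = 0} onto T_d S² = {v ∈ ℝ³ : v·d = 0}, and its kernel on ℝ³ is span(d₀). -/

import Mathlib

open Matrix Real

noncomputable def skewM (w : Fin 3 → ℝ) : Matrix (Fin 3) (Fin 3) ℝ :=
  !![0, -w 2, w 1; w 2, 0, -w 0; -w 1, w 0, 0]

noncomputable def chiR (d₀ d : Fin 3 → ℝ) : Matrix (Fin 3) (Fin 3) ℝ :=
  (d₀ ⬝ᵥ d) • (1 : Matrix (Fin 3) (Fin 3) ℝ) + skewM (d₀ ⨯₃ d)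
    + (1 / (1 + d₀ ⬝ᵥ d)) • vecMulVec (d₀ ⨯₃ d) (d₀ ⨯₃ d)

noncomputable def nrm (w : Fin 3 → ℝ) : ℝ := Real.sqrt (w ⬝ᵥ w)

lemma chiR_transpose (d₀ d : Fin 3 → ℝ) : (chiR d₀ d)ᵀ = chiR d d₀ := by
  ext i j
  fin_cases i <;> fin_cases j <;>
  · simp [chiR, skewM, crossProduct, vecMulVec, dotProduct, Fin.sum_univ_three,
      Matrix.one_apply, Matrix.add_apply, Matrix.smul_apply, Matrix.transpose_apply]
    ring

lemma chiR_mulVec_self (d₀ d : Fin 3 → ℝ) (h₀ : d₀ ⬝ᵥ d₀ = 1) (h : d₀ ⬝ᵥ d ≠ -1) :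
    chiR d₀ d *ᵥ d₀ = d := by
  have hs : (1 : ℝ) + d₀ ⬝ᵥ d ≠ 0 := by
    intro hc; apply h; linarith
  simp only [dotProduct, Fin.sum_univ_three] at h₀ hs ⊢
  funext i
  fin_cases i <;>
  · simp [chiR, skewM, crossProduct, vecMulVec, mulVec, dotProduct, Fin.sum_univ_three,
      Matrix.one_apply, Matrix.add_apply, Matrix.smul_apply, cons_val_zero, cons_val_one]
    first
      | linear_combination (d 0) * h₀
      | linear_combination (d 1) * h₀
      | linear_combination (d 2) * h₀

set_option maxHeartbeats 4000000 in
lemma chiR_orth (d₀ d : Fin 3 → ℝ) (h₀ : d₀ ⬝ᵥ d₀ = 1) (h₁ : d ⬝ᵥ d = 1)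
    (h : d₀ ⬝ᵥ d ≠ -1) : chiR d d₀ * chiR d₀ d = 1 := by
  have hs : (1 : ℝ) + d₀ ⬝ᵥ d ≠ 0 := by
    intro hc; apply h; linarith
  simp only [dotProduct, Fin.sum_univ_three] at h₀ h₁ hs
  have hs' : (1 : ℝ) + (d 0 * d₀ 0 + d 1 * d₀ 1 + d 2 * d₀ 2) ≠ 0 := by
    intro hc; apply hs; linarith
  ext i j
  fin_cases i <;> fin_cases j <;>
    simp [chiR, skewM, crossProduct, vecMulVec, Matrix.mul_apply, dotProduct,
      Fin.sum_univ_three, Matrix.one_apply, Matrix.add_apply, Matrix.smul_apply] <;>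
    simp only [mul_comm (d _) (d₀ _)] <;>
    set s := (1 : ℝ) + (d₀ 0 * d 0 + d₀ 1 * d 1 + d₀ 2 * d 2) with hsdef <;>
    field_simp <;>
    rw [hsdef]
  · linear_combination (((1 + (d₀ 0 * d 0 + d₀ 1 * d 1 + d₀ 2 * d 2))^2 + (d₀ 1 * d 2 - d₀ 2 * d 1)^2)) * ((d 0 * d 0 + d 1 * d 1 + d 2 * d 2) * h₀ + h₁)
  · linear_combination ((d₀ 1 * d 2 - d₀ 2 * d 1) * (d₀ 2 * d 0 - d₀ 0 * d 2)) * ((d 0 * d 0 + d 1 * d 1 + d 2 * d 2) * h₀ + h₁)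
  · linear_combination ((d₀ 1 * d 2 - d₀ 2 * d 1) * (d₀ 0 * d 1 - d₀ 1 * d 0)) * ((d 0 * d 0 + d 1 * d 1 + d 2 * d 2) * h₀ + h₁)
  · linear_combination ((d₀ 1 * d 2 - d₀ 2 * d 1) * (d₀ 2 * d 0 - d₀ 0 * d 2)) * ((d 0 * d 0 + d 1 * d 1 + d 2 * d 2) * h₀ + h₁)
  · linear_combination (((1 + (d₀ 0 * d 0 + d₀ 1 * d 1 + d₀ 2 * d 2))^2 + (d₀ 2 * d 0 - d₀ 0 * d 2)^2)) * ((d 0 * d 0 + d 1 * d 1 + d 2 * d 2) * h₀ + h₁)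
  · linear_combination ((d₀ 2 * d 0 - d₀ 0 * d 2) * (d₀ 0 * d 1 - d₀ 1 * d 0)) * ((d 0 * d 0 + d 1 * d 1 + d 2 * d 2) * h₀ + h₁)
  · linear_combination ((d₀ 1 * d 2 - d₀ 2 * d 1) * (d₀ 0 * d 1 - d₀ 1 * d 0)) * ((d 0 * d 0 + d 1 * d 1 + d 2 * d 2) * h₀ + h₁)
  · linear_combination ((d₀ 2 * d 0 - d₀ 0 * d 2) * (d₀ 0 * d 1 - d₀ 1 * d 0)) * ((d 0 * d 0 + d 1 * d 1 + d 2 * d 2) * h₀ + h₁)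
  · linear_combination (((1 + (d₀ 0 * d 0 + d₀ 1 * d 1 + d₀ 2 * d 2))^2 + (d₀ 0 * d 1 - d₀ 1 * d 0)^2)) * ((d 0 * d 0 + d 1 * d 1 + d 2 * d 2) * h₀ + h₁)

lemma vecMulVec_mulVec' (a b v : Fin 3 → ℝ) :
    vecMulVec a b *ᵥ v = (b ⬝ᵥ v) • a := by
  funext i
  simp [vecMulVec_apply, mulVec, dotProduct, Fin.sum_univ_three]
  ring

theorem chiP_tangent_bijection (d₀ d : Fin 3 → ℝ) (h₀ : d₀ ⬝ᵥ d₀ = 1)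
    (h₁ : d ⬝ᵥ d = 1) (h : d₀ ⬝ᵥ d ≠ -1) :
    Set.BijOn (fun v => (chiR d₀ d - vecMulVec d d₀) *ᵥ v)
      {v : Fin 3 → ℝ | v ⬝ᵥ d₀ = 0} {v : Fin 3 → ℝ | v ⬝ᵥ d = 0} ∧
    ∀ v : Fin 3 → ℝ,
      (chiR d₀ d - vecMulVec d d₀) *ᵥ v = 0 ↔ v ∈ Submodule.span ℝ {d₀} := by
  have hsym : d ⬝ᵥ d₀ ≠ -1 := by rwa [dotProduct_comm]
  have hB₁ : chiR d₀ d *ᵥ d₀ = d := chiR_mulVec_self d₀ d h₀ h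
  have hB₂ : chiR d d₀ *ᵥ d = d₀ := chiR_mulVec_self d d₀ h₁ hsym
  have hA₁ : chiR d d₀ * chiR d₀ d = 1 := chiR_orth d₀ d h₀ h₁ h
  have hA₂ : chiR d₀ d * chiR d d₀ = 1 := mul_eq_one_comm.mp hA₁
  have hMv : ∀ v, (chiR d₀ d - vecMulVec d d₀) *ᵥ v
      = chiR d₀ d *ᵥ v - (d₀ ⬝ᵥ v) • d := by
    intro v
    rw [Matrix.sub_mulVec, vecMulVec_mulVec']
  -- the kernel characterization
  have hker : ∀ v : Fin 3 → ℝ,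
      (chiR d₀ d - vecMulVec d d₀) *ᵥ v = 0 ↔ v ∈ Submodule.span ℝ {d₀} := by
    intro v
    rw [Submodule.mem_span_singleton]
    constructor
    · intro hv
      rw [hMv v, sub_eq_zero] at hv
      refine ⟨d₀ ⬝ᵥ v, ?_⟩
      have h2 : chiR d d₀ *ᵥ (chiR d₀ d *ᵥ v) = chiR d d₀ *ᵥ ((d₀ ⬝ᵥ v) • d) := by
        rw [hv]
      rw [Matrix.mulVec_mulVec, hA₁, Matrix.one_mulVec, Matrix.mulVec_smul, hB₂] at h2
      exact h2.symm
    · rintro ⟨t, rfl⟩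
      rw [hMv, Matrix.mulVec_smul, hB₁]
      have : d₀ ⬝ᵥ (t • d₀) = t := by
        rw [dotProduct_smul, h₀, smul_eq_mul, mul_one]
      rw [this, sub_self]
  refine ⟨⟨?_, ?_, ?_⟩, hker⟩
  · -- MapsTo
    intro v hv
    simp only [Set.mem_setOf_eq] at hv ⊢
    rw [hMv v, sub_dotProduct, dotProduct_comm, Matrix.dotProduct_mulVec,
      ← Matrix.mulVec_transpose, chiR_transpose, hB₂, smul_dotProduct, h₁,
      smul_eq_mul, mul_one, dotProduct_comm d₀ v, hv, sub_self]
  · -- InjOn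
    intro v₁ h1 v₂ h2 heq
    simp only [Set.mem_setOf_eq] at h1 h2
    have hz : (chiR d₀ d - vecMulVec d d₀) *ᵥ (v₁ - v₂) = 0 := by
      rw [Matrix.mulVec_sub, sub_eq_zero]
      exact heq
    rcases (hker _).mp hz with ht
    rw [Submodule.mem_span_singleton] at ht
    obtain ⟨t, htv⟩ := ht
    have hd : (v₁ - v₂) ⬝ᵥ d₀ = 0 := by
      rw [sub_dotProduct, h1, h2, sub_self]
    rw [← htv, smul_dotProduct, h₀, smul_eq_mul, mul_one] at hd
    have : v₁ - v₂ = 0 := by rw [← htv, hd, zero_smul]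
    exact sub_eq_zero.mp this
  · -- SurjOn
    intro w hw
    simp only [Set.mem_setOf_eq] at hw
    refine ⟨chiR d d₀ *ᵥ w, ?_, ?_⟩
    · simp only [Set.mem_setOf_eq]
      rw [← chiR_transpose, Matrix.mulVec_transpose, ← Matrix.dotProduct_mulVec, hB₁,
        dotProduct_comm]
      rw [dotProduct_comm]
      exact hw
    · show (chiR d₀ d - vecMulVec d d₀) *ᵥ (chiR d d₀ *ᵥ w) = w
      rw [hMv]
      have hd0 : d₀ ⬝ᵥ (chiR d d₀ *ᵥ w) = 0 := by
        rw [← chiR_transpose, Matrix.dotProduct_mulVec, Matrix.vecMul_transpose, hB₁,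
          dotProduct_comm]
        exact hw
      rw [hd0, zero_smul, sub_zero, Matrix.mulVec_mulVec, hA₂, Matrix.one_mulVec]
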